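/- (Combined velocity–pressure stability of the continuous transient Stokes problem.) In the abstract transient Stokes setting, suppose additionally that u is continuously differentiable as a map into (V, ‖·‖_V), that t ↦ ‖p(t)‖_Q is continuous, and that the inf-sup condition holds: there is β > 0 with β ‖r‖_Q ≤ sup_{v ∈ V, v ≠ 0} |b(r, v)| / ‖v‖_V for all r ∈ Q. Then there exists a constant C > 0 depending only on β such that ‖u(T)‖_H² + ∫_0^T ‖u(t)‖_V² dt + ∫_0^T ‖p(t)‖_Q² dt ≤ C [ ‖u(0)‖_H² + (c_P²/ν) ‖u(0)‖_V² + (c_P²/ν) ∫_0^T ‖f(t)‖_H² dt ]. -/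

import Mathlib

open scoped RealInnerProductSpace
open Filter

section Aux
variable {E : Type*} [AddCommGroup E] [Module ℝ E]

lemma bilin_cs (a : E →ₗ[ℝ] E →ₗ[ℝ] ℝ) (hsymm : ∀ v w, a v w = a w v)
    (hnn : ∀ v, 0 ≤ a v v) (v w : E) :
    |a v w| ≤ Real.sqrt (a v v) * Real.sqrt (a w w) := by
  have key : (a v w) ^ 2 ≤ a v v * a w w := by
    have h : ∀ x : ℝ, 0 ≤ (a w w) * (x * x) + (2 * a v w) * x + a v v := by
      intro x
      have h0 := hnn (x • w + v)
      have he : a (x • w + v) (x • w + v)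
          = (a w w) * (x * x) + (2 * a v w) * x + a v v := by
        simp only [map_add, map_smul, LinearMap.add_apply, LinearMap.smul_apply,
          smul_eq_mul]
        rw [hsymm w v]; ring
      linarith [he ▸ h0]
    have hd := discrim_le_zero h
    rw [discrim] at hd
    nlinarith
  calc |a v w| = Real.sqrt ((a v w) ^ 2) := (Real.sqrt_sq_eq_abs _).symm
    _ ≤ Real.sqrt (a v v * a w w) := Real.sqrt_le_sqrt key
    _ = Real.sqrt (a v v) * Real.sqrt (a w w) := Real.sqrt_mul (hnn v) _

lemma bilin_smul (a : E →ₗ[ℝ] E →ₗ[ℝ] ℝ) (c : ℝ) (v : E) :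
    Real.sqrt (a (c • v) (c • v)) = |c| * Real.sqrt (a v v) := by
  have h : a (c • v) (c • v) = c ^ 2 * a v v := by
    simp only [map_smul, LinearMap.smul_apply, smul_eq_mul]; ring
  rw [h, Real.sqrt_mul (sq_nonneg c), Real.sqrt_sq_eq_abs]

lemma bilin_add (a : E →ₗ[ℝ] E →ₗ[ℝ] ℝ) (hsymm : ∀ v w, a v w = a w v)
    (hnn : ∀ v, 0 ≤ a v v) (v w : E) :
    Real.sqrt (a (v + w) (v + w)) ≤ Real.sqrt (a v v) + Real.sqrt (a w w) := by
  have hexp : a (v + w) (v + w) = a v v + 2 * a v w + a w w := by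
    simp only [map_add, LinearMap.add_apply]; rw [hsymm w v]; ring
  have hcs := bilin_cs a hsymm hnn v w
  have h1 : a (v + w) (v + w) ≤ (Real.sqrt (a v v) + Real.sqrt (a w w)) ^ 2 := by
    have e1 : Real.sqrt (a v v) ^ 2 = a v v := Real.sq_sqrt (hnn v)
    have e2 : Real.sqrt (a w w) ^ 2 = a w w := Real.sq_sqrt (hnn w)
    have hle : a v w ≤ |a v w| := le_abs_self _
    nlinarith
  calc Real.sqrt (a (v + w) (v + w))
      ≤ Real.sqrt ((Real.sqrt (a v v) + Real.sqrt (a w w)) ^ 2) := Real.sqrt_le_sqrt h1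
    _ = |Real.sqrt (a v v) + Real.sqrt (a w w)| := Real.sqrt_sq_eq_abs _
    _ = _ := abs_of_nonneg (by positivity)

lemma bilin_sub (a : E →ₗ[ℝ] E →ₗ[ℝ] ℝ) (hsymm : ∀ v w, a v w = a w v)
    (hnn : ∀ v, 0 ≤ a v v) (v w : E) :
    Real.sqrt (a (v - w) (v - w)) ≤ Real.sqrt (a v v) + Real.sqrt (a w w) := by
  have h := bilin_add a hsymm hnn v (-w)
  have hneg : a (-w) (-w) = a w w := by simp
  simpa [sub_eq_add_neg, hneg] using h
end Aux

set_option maxHeartbeats 4000000 in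
theorem continuous_stokes_combined_stability (β : ℝ) (hβ : 0 < β) :
    ∃ C : ℝ, 0 < C ∧
      ∀ (H : Type*) [NormedAddCommGroup H] [InnerProductSpace ℝ H] [CompleteSpace H]
        (V : Submodule ℝ H)
        (a : V →ₗ[ℝ] V →ₗ[ℝ] ℝ),
        (∀ v w : V, a v w = a w v) →
        (∀ v : V, v ≠ 0 → 0 < a v v) →
        ∀ (ν cP : ℝ), 0 < ν → 0 < cP →
        (∀ v : V, ‖(v : H)‖ ≤ cP / Real.sqrt ν * Real.sqrt (a v v)) →
        ∀ (Q : Type*) [instQ : NormedAddCommGroup Q] [instQ2 : NormedSpace ℝ Q]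
          (b : Q →ₗ[ℝ] V →ₗ[ℝ] ℝ) (Cb : ℝ),
        (∀ (r : Q) (v : V), |b r v| ≤ Cb * ‖r‖ * Real.sqrt (a v v)) →
        -- inf-sup condition with constant β
        (∀ r : Q, ∀ c : ℝ,
          (∀ v : V, v ≠ 0 → |b r v| / Real.sqrt (a v v) ≤ c) → β * ‖r‖ ≤ c) →
        ∀ (T : ℝ), 0 ≤ T →
        ∀ (u : ℝ → V) (p : ℝ → Q) (f : ℝ → H) (u' : ℝ → H),
        (∀ t ∈ Set.Icc (0 : ℝ) T,
          HasDerivWithinAt (fun s => (u s : H)) (u' t) (Set.Icc (0 : ℝ) T) t) →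
        ContinuousOn u' (Set.Icc (0 : ℝ) T) →
        ContinuousOn (fun t => a (u t) (u t)) (Set.Icc (0 : ℝ) T) →
        ContinuousOn f (Set.Icc (0 : ℝ) T) →
        (∀ t ∈ Set.Icc (0 : ℝ) T,
          (∀ v : V, ⟪u' t, (v : H)⟫ + a (u t) v + b (p t) v = ⟪f t, (v : H)⟫) ∧
          (∀ r : Q, b r (u t) = 0)) →
        -- additionally `u` is continuously differentiable as a map into `(V, ‖·‖_V)`
        ∀ (uV' : ℝ → V),
        (∀ t ∈ Set.Icc (0 : ℝ) T, (uV' t : H) = u' t) →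
        (∀ t ∈ Set.Icc (0 : ℝ) T,
          Filter.Tendsto
            (fun s : ℝ => Real.sqrt
              (a ((s - t)⁻¹ • (u s - u t) - uV' t) ((s - t)⁻¹ • (u s - u t) - uV' t)))
            (nhdsWithin t (Set.Icc (0 : ℝ) T \ {t})) (nhds 0)) →
        (∀ t ∈ Set.Icc (0 : ℝ) T,
          Filter.Tendsto (fun s : ℝ => Real.sqrt (a (uV' s - uV' t) (uV' s - uV' t)))
            (nhdsWithin t (Set.Icc (0 : ℝ) T)) (nhds 0)) →
        -- `t ↦ ‖p(t)‖_Q` is continuous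
        ContinuousOn (fun t => ‖p t‖) (Set.Icc (0 : ℝ) T) →
        ‖(u T : H)‖ ^ 2 + (∫ t in (0 : ℝ)..T, a (u t) (u t))
            + (∫ t in (0 : ℝ)..T, ‖p t‖ ^ 2)
          ≤ C * (‖(u 0 : H)‖ ^ 2 + cP ^ 2 / ν * a (u 0) (u 0)
              + cP ^ 2 / ν * ∫ t in (0 : ℝ)..T, ‖f t‖ ^ 2) := by
  refine ⟨1 + 10 / β ^ 2, by positivity, ?_⟩
  intro H _ _ _ V a hsymm hpos ν cP hν hcP hpoin Q instQ instQ2 b Cb hb hinfsup T hT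
    u p f u' hderiv hu'cont haucont hfcont heq uV' huV'eq hVdiff hVcont hpcont
  have hnn : ∀ v : V, 0 ≤ a v v := by
    intro v
    rcases eq_or_ne v 0 with rfl | hv
    · simp
    · exact (hpos v hv).le
  set K : ℝ := cP ^ 2 / ν with hKdef
  have hK : 0 < K := by positivity
  rcases eq_or_lt_of_le hT with rfl | hTpos
  · simp only [intervalIntegral.integral_same]
    have h1 := hnn (u 0)
    have h2 : (0:ℝ) ≤ ‖(u 0 : H)‖ ^ 2 := by positivity
    have hβ2 : (0:ℝ) < β ^ 2 := by positivity
    have h3 : (0:ℝ) < 10 / β ^ 2 := by positivity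
    nlinarith [mul_nonneg hK.le h1]
  -- main case 0 < T
  set I : Set ℝ := Set.Icc (0 : ℝ) T with hIdef
  -- the punctured neighborhood filters are nontrivial
  have hNeBot : ∀ t ∈ I, (nhdsWithin t (I \ {t})).NeBot := by
    intro t ht
    rcases lt_or_eq_of_le ht.2 with h | h
    · have hsub : Set.Ioo t T ⊆ I \ {t} := by
        intro x hx
        exact ⟨⟨le_trans ht.1 hx.1.le, hx.2.le⟩, fun hxx => by
          simp only [Set.mem_singleton_iff] at hxx; exact absurd (hxx ▸ hx.1) (lt_irrefl _)⟩
      exact (left_nhdsWithin_Ioo_neBot h).mono (nhdsWithin_mono t hsub)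
    · subst h
      have hsub : Set.Ioo 0 t ⊆ I \ {t} := by
        intro x hx
        exact ⟨⟨hx.1.le, hx.2.le⟩, fun hxx => by
          simp only [Set.mem_singleton_iff] at hxx; exact absurd (hxx ▸ hx.2) (lt_irrefl _)⟩
      exact (right_nhdsWithin_Ioo_neBot hTpos).mono (nhdsWithin_mono t hsub)
  have hucontH : ContinuousOn (fun s => (u s : H)) I :=
    fun t ht => (hderiv t ht).continuousWithinAt
  have hle_sup : ∀ t : ℝ, nhdsWithin t I ≤ nhdsWithin t (I \ {t}) ⊔ pure t := by
    intro t
    have hsub : I ⊆ (I \ {t}) ∪ {t} := by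
      intro x hx
      by_cases hxt : x = t
      · exact Or.inr (by simp [hxt])
      · exact Or.inl ⟨hx, hxt⟩
    calc nhdsWithin t I ≤ nhdsWithin t ((I \ {t}) ∪ {t}) := nhdsWithin_mono t hsub
      _ = nhdsWithin t (I \ {t}) ⊔ pure t := by rw [nhdsWithin_union, nhdsWithin_singleton]
  -- convergence of u in the V-seminorm
  have huNdiff : ∀ t ∈ I, Tendsto (fun s => Real.sqrt (a (u s - u t) (u s - u t)))
      (nhdsWithin t I) (nhds 0) := by
    intro t ht
    have h1 : Tendsto (fun s => Real.sqrt (a (u s - u t) (u s - u t)))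
        (nhdsWithin t (I \ {t})) (nhds 0) := by
      have habs : Tendsto (fun s : ℝ => |s - t|) (nhdsWithin t (I \ {t})) (nhds 0) := by
        have hc : Continuous fun s : ℝ => |s - t| :=
          (continuous_id.sub continuous_const).abs
        have h0 := hc.tendsto t
        simp only [sub_self, abs_zero] at h0
        exact h0.mono_left nhdsWithin_le_nhds
      have hd := hVdiff t ht
      have hlim : Tendsto (fun s : ℝ => |s - t| *
          (Real.sqrt (a ((s - t)⁻¹ • (u s - u t) - uV' t) ((s - t)⁻¹ • (u s - u t) - uV' t))
            + Real.sqrt (a (uV' t) (uV' t)))) (nhdsWithin t (I \ {t})) (nhds 0) := by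
        have := habs.mul (hd.add (tendsto_const_nhds (x := Real.sqrt (a (uV' t) (uV' t)))))
        simpa using this
      apply squeeze_zero' (Filter.Eventually.of_forall fun s => Real.sqrt_nonneg _) _ hlim
      filter_upwards [self_mem_nhdsWithin] with s hs
      have hst : s - t ≠ 0 := sub_ne_zero.mpr hs.2
      have hsm := bilin_smul a (s - t) ((s - t)⁻¹ • (u s - u t))
      rw [smul_inv_smul₀ hst] at hsm
      calc Real.sqrt (a (u s - u t) (u s - u t))
          = |s - t| * Real.sqrt (a ((s - t)⁻¹ • (u s - u t)) ((s - t)⁻¹ • (u s - u t))) := hsm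
        _ ≤ |s - t| * (Real.sqrt (a ((s - t)⁻¹ • (u s - u t) - uV' t)
              ((s - t)⁻¹ • (u s - u t) - uV' t)) + Real.sqrt (a (uV' t) (uV' t))) := by
            apply mul_le_mul_of_nonneg_left _ (abs_nonneg _)
            have hq : (s - t)⁻¹ • (u s - u t)
                = ((s - t)⁻¹ • (u s - u t) - uV' t) + uV' t := (sub_add_cancel _ _).symm
            calc Real.sqrt (a ((s - t)⁻¹ • (u s - u t)) ((s - t)⁻¹ • (u s - u t)))
                = Real.sqrt (a (((s - t)⁻¹ • (u s - u t) - uV' t) + uV' t)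
                    (((s - t)⁻¹ • (u s - u t) - uV' t) + uV' t)) := by rw [← hq]
              _ ≤ _ := bilin_add a hsymm hnn _ _
    have h2 : Tendsto (fun s => Real.sqrt (a (u s - u t) (u s - u t)))
        (pure t) (nhds 0) := by
      have he : Real.sqrt (a (u t - u t) (u t - u t)) = 0 := by simp
      simpa [he] using tendsto_pure_nhds (fun s => Real.sqrt (a (u s - u t) (u s - u t))) t
    exact (tendsto_sup.mpr ⟨h1, h2⟩).mono_left (hle_sup t)
  -- b annihilates the V-derivative
  have hbu'0 : ∀ t ∈ I, ∀ r : Q, b r (uV' t) = 0 := by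
    intro t ht r
    haveI := hNeBot t ht
    have hlim : Tendsto (fun s : ℝ => Cb * ‖r‖ *
        Real.sqrt (a ((s - t)⁻¹ • (u s - u t) - uV' t) ((s - t)⁻¹ • (u s - u t) - uV' t)))
        (nhdsWithin t (I \ {t})) (nhds 0) := by
      simpa using (hVdiff t ht).const_mul (Cb * ‖r‖)
    have hub : ∀ᶠ s in nhdsWithin t (I \ {t}), |b r (uV' t)| ≤ Cb * ‖r‖ *
        Real.sqrt (a ((s - t)⁻¹ • (u s - u t) - uV' t) ((s - t)⁻¹ • (u s - u t) - uV' t)) := by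
      filter_upwards [self_mem_nhdsWithin] with s hs
      have hst : s - t ≠ 0 := sub_ne_zero.mpr hs.2
      have hq0 : b r ((s - t)⁻¹ • (u s - u t)) = 0 := by
        have h1 := (heq s hs.1).2 r
        have h2 := (heq t ht).2 r
        simp [map_sub, map_smul, h1, h2]
      have hval : b r (uV' t) = - b r ((s - t)⁻¹ • (u s - u t) - uV' t) := by
        simp [map_sub, hq0]
      rw [hval, abs_neg]
      exact hb r _
    have hle0 : |b r (uV' t)| ≤ 0 := ge_of_tendsto hlim hub
    exact abs_nonpos_iff.mp hle0
  -- continuity of t ↦ a (uV' t) (u t)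
  have hgcont : ContinuousOn (fun t => a (uV' t) (u t)) I := by
    intro t ht
    have hdiff0 : Tendsto (fun s => a (uV' s) (u s) - a (uV' t) (u t))
        (nhdsWithin t I) (nhds 0) := by
      have hlim : Tendsto (fun s => Real.sqrt (a (uV' s - uV' t) (uV' s - uV' t)) *
          (Real.sqrt (a (u s - u t) (u s - u t)) + Real.sqrt (a (u t) (u t)))
          + Real.sqrt (a (uV' t) (uV' t)) * Real.sqrt (a (u s - u t) (u s - u t)))
          (nhdsWithin t I) (nhds 0) := by
        have h1 := (hVcont t ht).mul ((huNdiff t ht).add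
          (tendsto_const_nhds (x := Real.sqrt (a (u t) (u t)))))
        have h2 := (huNdiff t ht).const_mul (Real.sqrt (a (uV' t) (uV' t)))
        simpa using h1.add h2
      apply squeeze_zero_norm' _ hlim
      filter_upwards [] with s
      have hid : a (uV' s) (u s) - a (uV' t) (u t)
          = a (uV' s - uV' t) (u s) + a (uV' t) (u s - u t) := by
        simp only [map_sub, LinearMap.sub_apply]; ring
      rw [Real.norm_eq_abs, hid]
      have hus : Real.sqrt (a (u s) (u s))
          ≤ Real.sqrt (a (u s - u t) (u s - u t)) + Real.sqrt (a (u t) (u t)) := by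
        have : u s = (u s - u t) + u t := (sub_add_cancel _ _).symm
        calc Real.sqrt (a (u s) (u s))
            = Real.sqrt (a ((u s - u t) + u t) ((u s - u t) + u t)) := by rw [← this]
          _ ≤ _ := bilin_add a hsymm hnn _ _
      calc |a (uV' s - uV' t) (u s) + a (uV' t) (u s - u t)|
          ≤ |a (uV' s - uV' t) (u s)| + |a (uV' t) (u s - u t)| := abs_add_le _ _
        _ ≤ Real.sqrt (a (uV' s - uV' t) (uV' s - uV' t)) * Real.sqrt (a (u s) (u s))
            + Real.sqrt (a (uV' t) (uV' t)) * Real.sqrt (a (u s - u t) (u s - u t)) :=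
            add_le_add (bilin_cs a hsymm hnn _ _) (bilin_cs a hsymm hnn _ _)
        _ ≤ _ := by
            have := mul_le_mul_of_nonneg_left hus (Real.sqrt_nonneg
              (a (uV' s - uV' t) (uV' s - uV' t)))
            linarith
    have : Tendsto (fun s => a (uV' s) (u s)) (nhdsWithin t I)
        (nhds (a (uV' t) (u t))) := by
      have h := tendsto_const_nhds (x := a (uV' t) (u t))
        (f := nhdsWithin t I) |>.add hdiff0
      simpa using h
    exact this
  -- derivative of t ↦ a (u t) (u t)
  have hψderiv : ∀ t ∈ I, HasDerivWithinAt (fun s => a (u s) (u s))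
      (2 * a (uV' t) (u t)) I t := by
    intro t ht
    rw [hasDerivWithinAt_iff_tendsto_slope]
    have hdiff0 : Tendsto (fun s => slope (fun s => a (u s) (u s)) t s
        - 2 * a (uV' t) (u t)) (nhdsWithin t (I \ {t})) (nhds 0) := by
      have hNd := hVdiff t ht
      have hNu : Tendsto (fun s => Real.sqrt (a (u s - u t) (u s - u t)))
          (nhdsWithin t (I \ {t})) (nhds 0) :=
        (huNdiff t ht).mono_left (nhdsWithin_mono t Set.diff_subset)
      have hlim : Tendsto (fun s : ℝ =>
          Real.sqrt (a ((s - t)⁻¹ • (u s - u t) - uV' t) ((s - t)⁻¹ • (u s - u t) - uV' t)) *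
            (Real.sqrt (a (u s - u t) (u s - u t)) + 2 * Real.sqrt (a (u t) (u t)))
          + Real.sqrt (a (uV' t) (uV' t)) * Real.sqrt (a (u s - u t) (u s - u t)))
          (nhdsWithin t (I \ {t})) (nhds 0) := by
        have h1 := hNd.mul (hNu.add
          (tendsto_const_nhds (x := 2 * Real.sqrt (a (u t) (u t)))))
        have h2 := hNu.const_mul (Real.sqrt (a (uV' t) (uV' t)))
        have h3 := h1.add h2
        simpa using h3
      apply squeeze_zero_norm' _ hlim
      filter_upwards [self_mem_nhdsWithin] with s hs
      have hst : s - t ≠ 0 := sub_ne_zero.mpr hs.2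
      -- slope identity
      have hexp : a (u s - u t) (u s + u t) = a (u s) (u s) - a (u t) (u t) := by
        simp only [map_sub, map_add, LinearMap.sub_apply, LinearMap.add_apply]
        rw [hsymm (u t) (u s)]; ring
      have hslope : slope (fun s => a (u s) (u s)) t s
          = a ((s - t)⁻¹ • (u s - u t)) (u s + u t) := by
        rw [slope_def_field]
        simp only [map_smul, LinearMap.smul_apply, smul_eq_mul]
        rw [hexp]
        field_simp
      have hid : slope (fun s => a (u s) (u s)) t s - 2 * a (uV' t) (u t)
          = a ((s - t)⁻¹ • (u s - u t) - uV' t) (u s + u t) + a (uV' t) (u s - u t) := by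
        rw [hslope]
        simp only [map_sub, map_add, LinearMap.sub_apply, LinearMap.add_apply]
        ring
      rw [Real.norm_eq_abs, hid]
      have hNsum : Real.sqrt (a (u s + u t) (u s + u t))
          ≤ Real.sqrt (a (u s - u t) (u s - u t)) + 2 * Real.sqrt (a (u t) (u t)) := by
        have hrw : u s + u t = (u s - u t) + (u t + u t) := by abel
        have h1 : Real.sqrt (a ((u s - u t) + (u t + u t)) ((u s - u t) + (u t + u t)))
            ≤ Real.sqrt (a (u s - u t) (u s - u t)) + Real.sqrt (a (u t + u t) (u t + u t)) :=
          bilin_add a hsymm hnn _ _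
        have h2 : Real.sqrt (a (u t + u t) (u t + u t))
            ≤ Real.sqrt (a (u t) (u t)) + Real.sqrt (a (u t) (u t)) := bilin_add a hsymm hnn _ _
        rw [← hrw] at h1
        linarith
      calc |a ((s - t)⁻¹ • (u s - u t) - uV' t) (u s + u t) + a (uV' t) (u s - u t)|
          ≤ |a ((s - t)⁻¹ • (u s - u t) - uV' t) (u s + u t)| + |a (uV' t) (u s - u t)| :=
            abs_add_le _ _
        _ ≤ Real.sqrt (a ((s - t)⁻¹ • (u s - u t) - uV' t) ((s - t)⁻¹ • (u s - u t) - uV' t))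
              * Real.sqrt (a (u s + u t) (u s + u t))
            + Real.sqrt (a (uV' t) (uV' t)) * Real.sqrt (a (u s - u t) (u s - u t)) :=
            add_le_add (bilin_cs a hsymm hnn _ _) (bilin_cs a hsymm hnn _ _)
        _ ≤ _ := by
            have := mul_le_mul_of_nonneg_left hNsum (Real.sqrt_nonneg
              (a ((s - t)⁻¹ • (u s - u t) - uV' t) ((s - t)⁻¹ • (u s - u t) - uV' t)))
            linarith
    have := (tendsto_const_nhds (x := 2 * a (uV' t) (u t))
      (f := nhdsWithin t (I \ {t}))).add hdiff0
    simpa using this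
  -- derivative of t ↦ ‖u t‖²
  have hφderiv : ∀ t ∈ I, HasDerivWithinAt (fun s => ‖(u s : H)‖ ^ 2)
      (2 * ⟪u' t, ((u t : H))⟫) I t := by
    intro t ht
    have h := HasDerivWithinAt.inner ℝ (hderiv t ht) (hderiv t ht)
    have he : (fun s : ℝ => (inner ℝ ((u s : H)) ((u s : H)) : ℝ))
        = fun s : ℝ => ‖(u s : H)‖ ^ 2 := funext fun s => real_inner_self_eq_norm_sq _
    rw [he] at h
    have e2 : (2 * ⟪u' t, ((u t : H))⟫ : ℝ) = ⟪((u t : H)), u' t⟫ + ⟪u' t, ((u t : H))⟫ := by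
      rw [real_inner_comm]
      ring
    rw [e2]
    exact h
  -- FTC helper
  have hFTC : ∀ (g g' : ℝ → ℝ), ContinuousOn g I → (∀ t ∈ I, HasDerivWithinAt g (g' t) I t) →
      IntervalIntegrable g' MeasureTheory.volume 0 T →
      ∫ t in (0:ℝ)..T, g' t = g T - g 0 := by
    intro g g' hg hg' hint
    refine intervalIntegral.integral_eq_sub_of_hasDeriv_right_of_le hT hg (fun x hx => ?_) hint
    have hx' : x ∈ I := Set.mem_Icc.mpr ⟨hx.1.le, hx.2.le⟩
    exact ((hg' x hx').hasDerivAt (Icc_mem_nhds hx.1 hx.2)).hasDerivWithinAt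
  -- integrabilities
  have huIcc : Set.uIcc (0:ℝ) T = I := Set.uIcc_of_le hT
  have intf2 : IntervalIntegrable (fun t => ‖f t‖ ^ 2) MeasureTheory.volume 0 T := by
    apply ContinuousOn.intervalIntegrable; rw [huIcc]; exact hfcont.norm.pow 2
  have intpsi : IntervalIntegrable (fun t => a (u t) (u t)) MeasureTheory.volume 0 T := by
    apply ContinuousOn.intervalIntegrable; rw [huIcc]; exact haucont
  have intp2 : IntervalIntegrable (fun t => ‖p t‖ ^ 2) MeasureTheory.volume 0 T := by
    apply ContinuousOn.intervalIntegrable; rw [huIcc]; exact hpcont.pow 2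
  have intu2 : IntervalIntegrable (fun t => ‖u' t‖ ^ 2) MeasureTheory.volume 0 T := by
    apply ContinuousOn.intervalIntegrable; rw [huIcc]; exact hu'cont.norm.pow 2
  have intinner : IntervalIntegrable (fun t => (⟪u' t, ((u t : H))⟫ : ℝ))
      MeasureTheory.volume 0 T := by
    apply ContinuousOn.intervalIntegrable; rw [huIcc]; exact hu'cont.inner hucontH
  have intg : IntervalIntegrable (fun t => a (uV' t) (u t)) MeasureTheory.volume 0 T := by
    apply ContinuousOn.intervalIntegrable; rw [huIcc]; exact hgcont
  -- FTC applications
  have hFTCφ : ∫ t in (0:ℝ)..T, 2 * ⟪u' t, ((u t : H))⟫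
      = ‖(u T : H)‖ ^ 2 - ‖(u 0 : H)‖ ^ 2 := by
    apply hFTC (fun s => ‖(u s : H)‖ ^ 2) (fun t => 2 * ⟪u' t, ((u t : H))⟫)
      (hucontH.norm.pow 2) hφderiv
    simpa using intinner.const_mul 2
  have hFTCψ : ∫ t in (0:ℝ)..T, 2 * a (uV' t) (u t)
      = a (u T) (u T) - a (u 0) (u 0) := by
    apply hFTC (fun s => a (u s) (u s)) (fun t => 2 * a (uV' t) (u t)) haucont hψderiv
    simpa using intg.const_mul 2
  -- basic numeric facts
  have hsqν : Real.sqrt ν ^ 2 = ν := Real.sq_sqrt hν.le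
  have hsqνpos : 0 < Real.sqrt ν := Real.sqrt_pos.mpr hν
  -- pointwise energy inequality
  have pt1 : ∀ t ∈ I, 2 * ⟪u' t, ((u t : H))⟫ + a (u t) (u t) ≤ K * ‖f t‖ ^ 2 := by
    intro t ht
    have heq1 := (heq t ht).1 (u t)
    have hb0 := (heq t ht).2 (p t)
    rw [hb0] at heq1
    have h1 : (⟪f t, ((u t : H))⟫ : ℝ) ≤ ‖f t‖ * ‖(u t : H)‖ := real_inner_le_norm _ _
    have h2 := hpoin (u t)
    have h3 : ‖f t‖ * ‖(u t : H)‖ ≤ ‖f t‖ * (cP / Real.sqrt ν * Real.sqrt (a (u t) (u t))) :=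
      mul_le_mul_of_nonneg_left h2 (norm_nonneg _)
    have h4 : Real.sqrt (a (u t) (u t)) ^ 2 = a (u t) (u t) := Real.sq_sqrt (hnn _)
    have hX : (cP / Real.sqrt ν * ‖f t‖) ^ 2 = K * ‖f t‖ ^ 2 := by
      rw [mul_pow, div_pow, hsqν, hKdef]
    nlinarith [sq_nonneg (cP / Real.sqrt ν * ‖f t‖ - Real.sqrt (a (u t) (u t)))]
  have hA : ‖(u T : H)‖ ^ 2 - ‖(u 0 : H)‖ ^ 2 + (∫ t in (0:ℝ)..T, a (u t) (u t))
      ≤ K * ∫ t in (0:ℝ)..T, ‖f t‖ ^ 2 := by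
    have hmono := intervalIntegral.integral_mono_on hT
      (((intinner.const_mul 2)).add intpsi) (intf2.const_mul K) pt1
    rw [intervalIntegral.integral_add (intinner.const_mul 2) intpsi,
      intervalIntegral.integral_const_mul] at hmono
    rw [intervalIntegral.integral_const_mul] at hmono
    have hFTCφ' := hFTCφ
    rw [intervalIntegral.integral_const_mul] at hFTCφ'
    linarith [hFTCφ', hmono]
  -- pointwise derivative-energy inequality
  have pt2 : ∀ t ∈ I, ‖u' t‖ ^ 2 + 2 * a (uV' t) (u t) ≤ ‖f t‖ ^ 2 := by
    intro t ht
    have heq1 := (heq t ht).1 (uV' t)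
    rw [huV'eq t ht] at heq1
    have hb0 := hbu'0 t ht (p t)
    rw [hb0] at heq1
    have hi : (⟪u' t, u' t⟫ : ℝ) = ‖u' t‖ ^ 2 := real_inner_self_eq_norm_sq _
    have h1 : (⟪f t, u' t⟫ : ℝ) ≤ ‖f t‖ * ‖u' t‖ := real_inner_le_norm _ _
    have hsa : a (u t) (uV' t) = a (uV' t) (u t) := hsymm _ _
    nlinarith [sq_nonneg (‖f t‖ - ‖u' t‖)]
  have hB : (∫ t in (0:ℝ)..T, ‖u' t‖ ^ 2) + (a (u T) (u T) - a (u 0) (u 0))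
      ≤ ∫ t in (0:ℝ)..T, ‖f t‖ ^ 2 := by
    have hmono := intervalIntegral.integral_mono_on hT
      (intu2.add (intg.const_mul 2)) intf2 pt2
    rw [intervalIntegral.integral_add intu2 (intg.const_mul 2),
      intervalIntegral.integral_const_mul] at hmono
    have hFTCψ' := hFTCψ
    rw [intervalIntegral.integral_const_mul] at hFTCψ'
    linarith [hFTCψ', hmono]
  -- pointwise pressure inequality
  have pt3 : ∀ t ∈ I, β ^ 2 * ‖p t‖ ^ 2
      ≤ 4 * K * (‖f t‖ ^ 2 + ‖u' t‖ ^ 2) + 2 * a (u t) (u t) := by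
    intro t ht
    have hkey : β * ‖p t‖ ≤ cP / Real.sqrt ν * ‖f t - u' t‖ + Real.sqrt (a (u t) (u t)) := by
      apply hinfsup
      intro v hv
      have hsq : 0 < Real.sqrt (a v v) := Real.sqrt_pos.mpr (hpos v hv)
      rw [div_le_iff₀ hsq]
      have heq1 := (heq t ht).1 v
      have hbv : b (p t) v = ⟪f t - u' t, (v : H)⟫ - a (u t) v := by
        rw [inner_sub_left]; linarith
      rw [hbv]
      have hI1 : |(⟪f t - u' t, (v : H)⟫ : ℝ)| ≤ ‖f t - u' t‖ * ‖(v : H)‖ :=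
        abs_real_inner_le_norm _ _
      have hI2 : |a (u t) v| ≤ Real.sqrt (a (u t) (u t)) * Real.sqrt (a v v) :=
        bilin_cs a hsymm hnn _ _
      have hI3 : ‖f t - u' t‖ * ‖(v : H)‖
          ≤ ‖f t - u' t‖ * (cP / Real.sqrt ν * Real.sqrt (a v v)) :=
        mul_le_mul_of_nonneg_left (hpoin v) (norm_nonneg _)
      calc |(⟪f t - u' t, (v : H)⟫ : ℝ) - a (u t) v|
          ≤ |(⟪f t - u' t, (v : H)⟫ : ℝ)| + |a (u t) v| := abs_sub _ _
        _ ≤ ‖f t - u' t‖ * (cP / Real.sqrt ν * Real.sqrt (a v v))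
            + Real.sqrt (a (u t) (u t)) * Real.sqrt (a v v) := by linarith
        _ = (cP / Real.sqrt ν * ‖f t - u' t‖ + Real.sqrt (a (u t) (u t)))
            * Real.sqrt (a v v) := by ring
    have h0 : (0:ℝ) ≤ β * ‖p t‖ := mul_nonneg hβ.le (norm_nonneg _)
    have hsqr : (β * ‖p t‖) ^ 2
        ≤ (cP / Real.sqrt ν * ‖f t - u' t‖ + Real.sqrt (a (u t) (u t))) ^ 2 := by
      apply pow_le_pow_left₀ h0 hkey
    have hX : (cP / Real.sqrt ν * ‖f t - u' t‖) ^ 2 = K * ‖f t - u' t‖ ^ 2 := by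
      rw [mul_pow, div_pow, hsqν, hKdef]
    have hY : Real.sqrt (a (u t) (u t)) ^ 2 = a (u t) (u t) := Real.sq_sqrt (hnn _)
    have h3 : ‖f t - u' t‖ ≤ ‖f t‖ + ‖u' t‖ := norm_sub_le _ _
    have h4 : ‖f t - u' t‖ ^ 2 ≤ 2 * ‖f t‖ ^ 2 + 2 * ‖u' t‖ ^ 2 := by
      nlinarith [norm_nonneg (f t - u' t), norm_nonneg (f t), norm_nonneg (u' t),
        sq_nonneg (‖f t‖ - ‖u' t‖)]
    nlinarith [sq_nonneg (cP / Real.sqrt ν * ‖f t - u' t‖ - Real.sqrt (a (u t) (u t))),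
      mul_pos hK (by positivity : (0:ℝ) < 1), hK.le,
      mul_le_mul_of_nonneg_left h4 hK.le]
  have hP : β ^ 2 * (∫ t in (0:ℝ)..T, ‖p t‖ ^ 2)
      ≤ 4 * K * ((∫ t in (0:ℝ)..T, ‖f t‖ ^ 2) + ∫ t in (0:ℝ)..T, ‖u' t‖ ^ 2)
        + 2 * ∫ t in (0:ℝ)..T, a (u t) (u t) := by
    have hmono := intervalIntegral.integral_mono_on hT
      (intp2.const_mul (β ^ 2))
      (((intf2.add intu2).const_mul (4 * K)).add (intpsi.const_mul 2))
      (fun t ht => pt3 t ht)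
    rw [intervalIntegral.integral_const_mul] at hmono
    rw [intervalIntegral.integral_add ((intf2.add intu2).const_mul (4 * K))
      (intpsi.const_mul 2), intervalIntegral.integral_const_mul,
      intervalIntegral.integral_const_mul,
      intervalIntegral.integral_add intf2 intu2] at hmono
    linarith
  -- nonnegativity of the integrals
  have hIψ : 0 ≤ ∫ t in (0:ℝ)..T, a (u t) (u t) :=
    intervalIntegral.integral_nonneg hT (fun x _ => hnn _)
  have hIf : 0 ≤ ∫ t in (0:ℝ)..T, ‖f t‖ ^ 2 :=
    intervalIntegral.integral_nonneg hT (fun x _ => by positivity)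
  have hIu : 0 ≤ ∫ t in (0:ℝ)..T, ‖u' t‖ ^ 2 :=
    intervalIntegral.integral_nonneg hT (fun x _ => by positivity)
  have hIp : 0 ≤ ∫ t in (0:ℝ)..T, ‖p t‖ ^ 2 :=
    intervalIntegral.integral_nonneg hT (fun x _ => by positivity)
  have hψT := hnn (u T)
  have hψ0 := hnn (u 0)
  have hφ0 : (0:ℝ) ≤ ‖(u 0 : H)‖ ^ 2 := by positivity
  have hφT : (0:ℝ) ≤ ‖(u T : H)‖ ^ 2 := by positivity
  have hβ2 : (0:ℝ) < β ^ 2 := by positivity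
  -- final combination
  set φ0 : ℝ := ‖(u 0 : H)‖ ^ 2
  set φT : ℝ := ‖(u T : H)‖ ^ 2
  set ψ0 : ℝ := a (u 0) (u 0)
  set Iψ : ℝ := ∫ t in (0:ℝ)..T, a (u t) (u t)
  set Ip : ℝ := ∫ t in (0:ℝ)..T, ‖p t‖ ^ 2
  set If : ℝ := ∫ t in (0:ℝ)..T, ‖f t‖ ^ 2
  set Iu : ℝ := ∫ t in (0:ℝ)..T, ‖u' t‖ ^ 2
  have hIple : Ip ≤ (2 * φ0 + 4 * K * ψ0 + 10 * K * If) / β ^ 2 := by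
    rw [le_div_iff₀ hβ2]
    have h1 : β ^ 2 * Ip ≤ 4 * K * (If + Iu) + 2 * Iψ := hP
    have h2 : Iu ≤ ψ0 + If := by linarith [hB, hψT]
    have h3 : Iψ ≤ φ0 + K * If := by linarith [hA, hφT]
    nlinarith [mul_le_mul_of_nonneg_left h2 (by linarith : (0:ℝ) ≤ 4 * K)]
  have hnum : (2 * φ0 + 4 * K * ψ0 + 10 * K * If) / β ^ 2
      ≤ 10 * (φ0 + K * ψ0 + K * If) / β ^ 2 := by
    rw [div_le_div_iff₀ hβ2 hβ2]
    have hnumineq : 2 * φ0 + 4 * K * ψ0 + 10 * K * If ≤ 10 * (φ0 + K * ψ0 + K * If) := by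
      nlinarith [mul_nonneg hK.le hψ0]
    nlinarith [mul_le_mul_of_nonneg_right hnumineq hβ2.le]
  have hrw : (1 + 10 / β ^ 2) * (φ0 + K * ψ0 + K * If)
      = (φ0 + K * ψ0 + K * If) + 10 * (φ0 + K * ψ0 + K * If) / β ^ 2 := by
    field_simp
  have hfin1 : φT + Iψ ≤ φ0 + K * If := by linarith [hA]
  have h2 : 0 ≤ K * ψ0 := mul_nonneg hK.le hψ0
  rw [hrw]
  linarith [hIple, hnum, hfin1, h2]
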